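/- (One-step L∞-stability.) Assume hypothesis (H2), that the data are bounded above (sup_{k∈ℤ} ρ_k < ∞), and that the CFL condition λ ≤ min{(8 − 27α)/(27L), 2/(27L), α/L} holds. Then for every j ∈ ℤ, |ρ'_j| ≤ (1 + C̃·Δt)·sup_{k∈ℤ} ρ_k, where C̃ := [α + λ·L + (1 + λ·L)²]·M·(1 + θ)²·(sup |μ'|)·m. -/

import Mathlib

open MeasureTheory

noncomputable section

/-- minmod limiter of three arguments. -/
def minmod3 (a b c : ℝ) : ℝ :=
  if 0 < a ∧ 0 < b ∧ 0 < c then min a (min b c)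
  else if a < 0 ∧ b < 0 ∧ c < 0 then max a (max b c)
  else 0

/-- MUSCL slopes `σ_j = 2θ·minmod(ρ_j − ρ_{j−1}, (ρ_{j+1} − ρ_{j−1})/2, ρ_{j+1} − ρ_j)`. -/
def slp (θ : ℝ) (ρ : ℤ → ℝ) (j : ℤ) : ℝ :=
  2 * θ * minmod3 (ρ j - ρ (j - 1)) ((ρ (j + 1) - ρ (j - 1)) / 2) (ρ (j + 1) - ρ j)

/-- left interface value `ρ⁻_{j+1/2} = ρ_j + σ_j/2`. -/
def intL (θ : ℝ) (ρ : ℤ → ℝ) (j : ℤ) : ℝ := ρ j + slp θ ρ j / 2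

/-- right interface value `ρ⁺_{j−1/2} = ρ_j − σ_j/2`. -/
def intR (θ : ℝ) (ρ : ℤ → ℝ) (j : ℤ) : ℝ := ρ j - slp θ ρ j / 2

/-- discrete convolution `A_j = Δx·Σ_l μ((j−l)Δx)·ρ_l`. -/
def Adisc (μ : ℝ → ℝ) (Δx : ℝ) (ρ : ℤ → ℝ) (j : ℤ) : ℝ :=
  Δx * ∑' l : ℤ, μ (((j : ℝ) - (l : ℝ)) * Δx) * ρ l

/-- `s_j = θ·(A_{j+1} − A_{j−1})`. -/
def sdisc (μ : ℝ → ℝ) (θ Δx : ℝ) (ρ : ℤ → ℝ) (j : ℤ) : ℝ :=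
  θ * (Adisc μ Δx ρ (j + 1) - Adisc μ Δx ρ (j - 1))

/-- `A⁻_{j+1/2} = A_j + s_j/2`. -/
def AdiscL (μ : ℝ → ℝ) (θ Δx : ℝ) (ρ : ℤ → ℝ) (j : ℤ) : ℝ :=
  Adisc μ Δx ρ j + sdisc μ θ Δx ρ j / 2

/-- `A⁺_{j−1/2} = A_j − s_j/2`. -/
def AdiscR (μ : ℝ → ℝ) (θ Δx : ℝ) (ρ : ℤ → ℝ) (j : ℤ) : ℝ :=
  Adisc μ Δx ρ j - sdisc μ θ Δx ρ j / 2

/-- mid-time value `ρ^{½,−}_{j+1/2}`. -/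
def midL (f : ℝ → ℝ → ℝ) (μ : ℝ → ℝ) (θ lam Δx : ℝ) (ρ : ℤ → ℝ) (j : ℤ) : ℝ :=
  intL θ ρ j - lam / 2 *
    (f (intL θ ρ j) (AdiscL μ θ Δx ρ j) - f (intR θ ρ j) (AdiscR μ θ Δx ρ j))

/-- mid-time value `ρ^{½,+}_{j−1/2}`. -/
def midR (f : ℝ → ℝ → ℝ) (μ : ℝ → ℝ) (θ lam Δx : ℝ) (ρ : ℤ → ℝ) (j : ℤ) : ℝ :=
  intR θ ρ j - lam / 2 *
    (f (intL θ ρ j) (AdiscL μ θ Δx ρ j) - f (intR θ ρ j) (AdiscR μ θ Δx ρ j))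

/-- mid-time convolution `A^{½}_{j+1/2}`. -/
def Amid (f : ℝ → ℝ → ℝ) (μ : ℝ → ℝ) (θ lam Δx : ℝ) (ρ : ℤ → ℝ) (j : ℤ) : ℝ :=
  Δx / 2 * ∑' l : ℤ,
    (μ (((j : ℝ) + 1 - (l : ℝ)) * Δx) * midR f μ θ lam Δx ρ l +
     μ (((j : ℝ) - (l : ℝ)) * Δx) * midL f μ θ lam Δx ρ l)

/-- Lax–Friedrichs type numerical flux `F(u,v,A)`. -/
def numFlux (f : ℝ → ℝ → ℝ) (α lam u v A : ℝ) : ℝ :=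
  (f u A + f v A) / 2 - α * (v - u) / (2 * lam)

/-- MUSCL–Hancock update `ρ'_j`. -/
def mhUpdate (f : ℝ → ℝ → ℝ) (μ : ℝ → ℝ) (θ α lam Δx : ℝ) (ρ : ℤ → ℝ) (j : ℤ) : ℝ :=
  ρ j - lam *
    (numFlux f α lam (midL f μ θ lam Δx ρ j) (midR f μ θ lam Δx ρ (j + 1))
        (Amid f μ θ lam Δx ρ j) -
     numFlux f α lam (midL f μ θ lam Δx ρ (j - 1)) (midR f μ θ lam Δx ρ j)
        (Amid f μ θ lam Δx ρ (j - 1)))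

set_option maxHeartbeats 4000000 in
/-- one-step L∞-stability of the MUSCL–Hancock update. -/
theorem stmt6 (f : ℝ → ℝ → ℝ) (μ : ℝ → ℝ) (Δx Δt lam θ α L M Cμ' : ℝ)
    (hΔx : 0 < Δx) (hΔt : 0 < Δt) (hlam : lam = Δt / Δx)
    (hθ0 : 0 ≤ θ) (hθ1 : θ ≤ 1 / 2) (hα0 : 0 < α) (hα1 : α < 8 / 27)
    (hf : ContDiff ℝ 2 (Function.uncurry f)) (hf0 : ∀ A : ℝ, f 0 A = 0)
    (hL : ∀ r A : ℝ, |deriv (fun x => f x A) r| ≤ L)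
    (hM : 0 < M) (hdA : ∀ r a : ℝ, |deriv (f r) a| ≤ M * |r|)
    (hdAA : ∀ r a : ℝ, |iteratedDeriv 2 (f r) a| ≤ M * |r|)
    (hμ : ContDiff ℝ 2 μ) (hμc : HasCompactSupport μ)
    (hCμ' : ∀ x : ℝ, |deriv μ x| ≤ Cμ')
    (hCFL : lam ≤ min ((8 - 27 * α) / (27 * L)) (min (2 / (27 * L)) (α / L)))
    (ρ : ℤ → ℝ) (hρ : ∀ j : ℤ, 0 ≤ ρ j) (hsum : Summable ρ)
    (hbdd : BddAbove (Set.range ρ)) (j : ℤ) :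
    |mhUpdate f μ θ α lam Δx ρ j| ≤
      (1 + (α + lam * L + (1 + lam * L) ^ 2) * M * (1 + θ) ^ 2 * Cμ' *
          (Δx * ∑' l : ℤ, ρ l) * Δt) * ⨆ k : ℤ, ρ k := by
  -- ===== basic numeric facts =====
  have hlam0 : 0 < lam := by rw [hlam]; positivity
  have hLnn : 0 ≤ L := le_trans (abs_nonneg _) (hL 0 0)
  have hCFL1 : lam ≤ 2 / (27 * L) :=
    le_trans hCFL (le_trans (min_le_right _ _) (min_le_left _ _))
  have hCFL2 : lam ≤ α / L :=
    le_trans hCFL (le_trans (min_le_right _ _) (min_le_right _ _))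
  have hL0 : 0 < L := by
    rcases hLnn.lt_or_eq with h | h
    · exact h
    · rw [← h, div_zero] at hCFL2; linarith
  have hlamL1 : lam * L ≤ α := by
    rw [le_div_iff₀ hL0] at hCFL2; linarith
  have hlamL2 : lam * L ≤ 2 / 27 := by
    rw [le_div_iff₀ (by positivity : (0:ℝ) < 27 * L)] at hCFL1
    nlinarith
  have hlamL0 : 0 < lam * L := mul_pos hlam0 hL0
  have hCp0 : 0 ≤ Cμ' := le_trans (abs_nonneg _) (hCμ' 0)
  have hα1' : α < 1 := lt_trans hα1 (by norm_num)
  -- ===== sup facts =====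
  obtain ⟨S, hSdef⟩ : ∃ S : ℝ, S = ⨆ k : ℤ, ρ k := ⟨_, rfl⟩
  obtain ⟨m, hmdef⟩ : ∃ m : ℝ, m = Δx * ∑' l : ℤ, ρ l := ⟨_, rfl⟩
  rw [← hSdef, ← hmdef]
  have hSk : ∀ k : ℤ, ρ k ≤ S := fun k => hSdef ▸ le_ciSup hbdd k
  have hS0 : 0 ≤ S := le_trans (hρ 0) (hSk 0)
  have htsum0 : 0 ≤ ∑' l : ℤ, ρ l := tsum_nonneg hρ
  have hm0 : 0 ≤ m := by rw [hmdef]; positivity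
  -- ===== abs helpers =====
  have habs2 : ∀ a b : ℝ, |a - b| ≤ |a| + |b| := fun a b =>
    abs_le.mpr ⟨by linarith [neg_abs_le a, le_abs_self b],
      by linarith [le_abs_self a, neg_abs_le b]⟩
  have habs4 : ∀ a b c d : ℝ, |a + b - c - d| ≤ |a| + |b| + |c| + |d| := fun a b c d =>
    abs_le.mpr ⟨by linarith [neg_abs_le a, neg_abs_le b, le_abs_self c, le_abs_self d],
      by linarith [le_abs_self a, le_abs_self b, neg_abs_le c, neg_abs_le d]⟩
  have habs3 : ∀ a b c : ℝ, |a - 2*b + c| ≤ |a| + 2*|b| + |c| := fun a b c =>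
    abs_le.mpr ⟨by linarith [neg_abs_le a, le_abs_self b, neg_abs_le c],
      by linarith [le_abs_self a, neg_abs_le b, le_abs_self c]⟩
  -- ===== differentiability and Lipschitz =====
  have hfdiff : Differentiable ℝ (Function.uncurry f) := hf.differentiable (by norm_num)
  have hfd1 : ∀ A : ℝ, Differentiable ℝ (fun x => f x A) := fun A =>
    hfdiff.comp (differentiable_id.prodMk (differentiable_const A))
  have hfd2 : ∀ r : ℝ, Differentiable ℝ (f r) := fun r =>
    hfdiff.comp ((differentiable_const r).prodMk differentiable_id)
  have hμd : Differentiable ℝ μ := hμ.differentiable (by norm_num)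
  have lipf1 : ∀ A x y : ℝ, |f x A - f y A| ≤ L * |x - y| := by
    intro A x y
    have h := convex_univ.norm_image_sub_le_of_norm_deriv_le (f := fun x => f x A)
      (fun z _ => (hfd1 A) z) (fun z _ => by simpa [Real.norm_eq_abs] using hL z A)
      (Set.mem_univ y) (Set.mem_univ x)
    simpa [Real.norm_eq_abs] using h
  have lipf2 : ∀ r a b : ℝ, |f r a - f r b| ≤ M * |r| * |a - b| := by
    intro r a b
    have h := convex_univ.norm_image_sub_le_of_norm_deriv_le (f := f r)
      (fun z _ => (hfd2 r) z) (fun z _ => by simpa [Real.norm_eq_abs] using hdA r z)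
      (Set.mem_univ b) (Set.mem_univ a)
    simpa [Real.norm_eq_abs] using h
  have lipμ : ∀ x y : ℝ, |μ x - μ y| ≤ Cμ' * |x - y| := by
    intro x y
    have h := convex_univ.norm_image_sub_le_of_norm_deriv_le (f := μ)
      (fun z _ => hμd z) (fun z _ => by simpa [Real.norm_eq_abs] using hCμ' z)
      (Set.mem_univ y) (Set.mem_univ x)
    simpa [Real.norm_eq_abs] using h
  have hfb : ∀ x A : ℝ, |f x A| ≤ L * |x| := by
    intro x A
    simpa [hf0 A] using lipf1 A x 0
  obtain ⟨Cμ, hCμ⟩ := hμ.continuous.bounded_above_of_compact_support hμc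
  have hCμ0 : 0 ≤ Cμ := le_trans (norm_nonneg (μ 0)) (hCμ 0)
  -- ===== summability helpers =====
  have hsummable : ∀ (g : ℤ → ℝ) (K : ℝ), (∀ l, |g l| ≤ K * ρ l) → Summable g := by
    intro g K hg
    have h1 : Summable fun l => |g l| :=
      Summable.of_nonneg_of_le (fun l => abs_nonneg _) hg (hsum.mul_left K)
    exact h1.of_abs
  have habstsum : ∀ g b : ℤ → ℝ, (∀ k, |g k| ≤ b k) → Summable b →
      |∑' k : ℤ, g k| ≤ ∑' k : ℤ, b k := by
    intro g b hgb hb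
    have h1 : Summable fun k => |g k| :=
      Summable.of_nonneg_of_le (fun k => abs_nonneg _) hgb hb
    calc |∑' k : ℤ, g k| ≤ ∑' k : ℤ, |g k| := by
          simpa [Real.norm_eq_abs] using
            norm_tsum_le_tsum_norm (f := g) (by simpa [Real.norm_eq_abs] using h1)
      _ ≤ ∑' k : ℤ, b k := Summable.tsum_le_tsum hgb h1 hb
  -- ===== minmod bound =====
  have hmm : ∀ l : ℤ, |slp θ ρ l| ≤ 2 * θ * min (ρ l) (S - ρ l) := by
    intro l
    have h0 : 0 ≤ min (ρ l) (S - ρ l) := le_min (hρ l) (by linarith [hSk l])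
    have hb : |minmod3 (ρ l - ρ (l - 1)) ((ρ (l + 1) - ρ (l - 1)) / 2) (ρ (l + 1) - ρ l)|
        ≤ min (ρ l) (S - ρ l) := by
      unfold minmod3
      split_ifs with h1 h2
      · obtain ⟨ha, hb', hc⟩ := h1
        rw [abs_of_pos (lt_min ha (lt_min hb' hc))]
        refine le_min (le_trans (min_le_left _ _) (by linarith [hρ (l - 1)])) ?_
        exact le_trans (le_trans (min_le_right _ _) (min_le_right _ _))
          (by linarith [hSk (l + 1)])
      · obtain ⟨ha, hb', hc⟩ := h2
        rw [abs_of_neg (max_lt ha (max_lt hb' hc))]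
        refine le_min ?_ ?_
        · have h3 : ρ (l + 1) - ρ l ≤
              max (ρ l - ρ (l - 1)) (max ((ρ (l + 1) - ρ (l - 1)) / 2) (ρ (l + 1) - ρ l)) :=
            le_max_of_le_right (le_max_right _ _)
          linarith [hρ (l + 1)]
        · have h3 : ρ l - ρ (l - 1) ≤
              max (ρ l - ρ (l - 1)) (max ((ρ (l + 1) - ρ (l - 1)) / 2) (ρ (l + 1) - ρ l)) :=
            le_max_left _ _
          linarith [hSk (l - 1)]
      · simpa using h0
    rw [slp, abs_mul, abs_of_nonneg (by positivity : (0:ℝ) ≤ 2 * θ)]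
    exact mul_le_mul_of_nonneg_left hb (by positivity)
  have hmin1 : ∀ l : ℤ, min (ρ l) (S - ρ l) ≤ ρ l := fun l => min_le_left _ _
  have hmin2 : ∀ l : ℤ, min (ρ l) (S - ρ l) ≤ S - ρ l := fun l => min_le_right _ _
  have hmin0 : ∀ l : ℤ, 0 ≤ min (ρ l) (S - ρ l) := fun l => le_min (hρ l) (by linarith [hSk l])
  have hslpρ : ∀ l : ℤ, |slp θ ρ l| ≤ ρ l := by
    intro l
    refine le_trans (hmm l) ?_
    calc 2 * θ * min (ρ l) (S - ρ l) ≤ 2 * θ * ρ l :=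
          mul_le_mul_of_nonneg_left (hmin1 l) (by positivity)
      _ ≤ 1 * ρ l := mul_le_mul_of_nonneg_right (by linarith) (hρ l)
      _ = ρ l := one_mul _
  -- ===== interface values =====
  have husum : ∀ l : ℤ, intL θ ρ l + intR θ ρ l = 2 * ρ l := by
    intro l; simp only [intL, intR]; ring
  have huvdiff : ∀ l : ℤ, intL θ ρ l - intR θ ρ l = slp θ ρ l := by
    intro l; simp only [intL, intR]; ring
  have hintL : ∀ l : ℤ, 0 ≤ intL θ ρ l ∧ intL θ ρ l ≤ S := by
    intro l
    obtain ⟨h1, h2⟩ := abs_le.1 (hmm l)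
    have h3 : 2 * θ * min (ρ l) (S - ρ l) ≤ 2 * θ * ρ l :=
      mul_le_mul_of_nonneg_left (hmin1 l) (by positivity)
    have h4 : 2 * θ * min (ρ l) (S - ρ l) ≤ 2 * θ * (S - ρ l) :=
      mul_le_mul_of_nonneg_left (hmin2 l) (by positivity)
    have h5 : θ * ρ l ≤ 1 * ρ l := mul_le_mul_of_nonneg_right (by linarith) (hρ l)
    have h6 : θ * (S - ρ l) ≤ 1 * (S - ρ l) :=
      mul_le_mul_of_nonneg_right (by linarith) (by linarith [hSk l])
    constructor
    · simp only [intL]; linarith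
    · simp only [intL]; linarith
  have hintR : ∀ l : ℤ, 0 ≤ intR θ ρ l ∧ intR θ ρ l ≤ S := by
    intro l
    obtain ⟨h1, h2⟩ := abs_le.1 (hmm l)
    have h3 : 2 * θ * min (ρ l) (S - ρ l) ≤ 2 * θ * ρ l :=
      mul_le_mul_of_nonneg_left (hmin1 l) (by positivity)
    have h4 : 2 * θ * min (ρ l) (S - ρ l) ≤ 2 * θ * (S - ρ l) :=
      mul_le_mul_of_nonneg_left (hmin2 l) (by positivity)
    have h5 : θ * ρ l ≤ 1 * ρ l := mul_le_mul_of_nonneg_right (by linarith) (hρ l)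
    have h6 : θ * (S - ρ l) ≤ 1 * (S - ρ l) :=
      mul_le_mul_of_nonneg_right (by linarith) (by linarith [hSk l])
    constructor
    · simp only [intR]; linarith
    · simp only [intR]; linarith
  have hintL2ρ : ∀ l : ℤ, intL θ ρ l ≤ 2 * ρ l := by
    intro l
    obtain ⟨h1, h2⟩ := abs_le.1 (hslpρ l)
    simp only [intL]; linarith [hρ l]
  have hintR2ρ : ∀ l : ℤ, intR θ ρ l ≤ 2 * ρ l := by
    intro l
    obtain ⟨h1, h2⟩ := abs_le.1 (hslpρ l)
    simp only [intR]; linarith [hρ l]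
  have hALR : ∀ l : ℤ, AdiscL μ θ Δx ρ l - AdiscR μ θ Δx ρ l = sdisc μ θ Δx ρ l := by
    intro l; simp only [AdiscL, AdiscR]; ring
  -- ===== convolution bounds =====
  have hsumA : ∀ x : ℤ → ℝ, Summable fun l : ℤ => μ (x l) * ρ l := by
    intro x
    apply hsummable _ Cμ
    intro l
    rw [abs_mul, abs_of_nonneg (hρ l)]
    exact mul_le_mul_of_nonneg_right (by simpa [Real.norm_eq_abs] using hCμ (x l)) (hρ l)
  have hsb : ∀ l : ℤ, |sdisc μ θ Δx ρ l| ≤ 2 * θ * Cμ' * Δx * m := by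
    intro l
    have key : Adisc μ Δx ρ (l + 1) - Adisc μ Δx ρ (l - 1) =
        Δx * ∑' k : ℤ, (μ (((l : ℝ) + 1 - (k : ℝ)) * Δx) - μ (((l : ℝ) - 1 - (k : ℝ)) * Δx)) * ρ k := by
      simp only [Adisc]
      rw [← mul_sub]
      congr 1
      rw [← Summable.tsum_sub (hsumA _) (hsumA _)]
      apply tsum_congr
      intro k
      push_cast
      ring
    have hptw : ∀ k : ℤ,
        |(μ (((l : ℝ) + 1 - (k : ℝ)) * Δx) - μ (((l : ℝ) - 1 - (k : ℝ)) * Δx)) * ρ k|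
          ≤ (2 * Cμ' * Δx) * ρ k := by
      intro k
      rw [abs_mul, abs_of_nonneg (hρ k)]
      refine mul_le_mul_of_nonneg_right ?_ (hρ k)
      calc |μ (((l : ℝ) + 1 - (k : ℝ)) * Δx) - μ (((l : ℝ) - 1 - (k : ℝ)) * Δx)|
          ≤ Cμ' * |((l : ℝ) + 1 - (k : ℝ)) * Δx - ((l : ℝ) - 1 - (k : ℝ)) * Δx| := lipμ _ _
        _ = Cμ' * |2 * Δx| := by rw [show ((l : ℝ) + 1 - (k : ℝ)) * Δx - ((l : ℝ) - 1 - (k : ℝ)) * Δx = 2 * Δx from by ring]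
        _ = 2 * Cμ' * Δx := by rw [abs_of_nonneg (by positivity : (0:ℝ) ≤ 2 * Δx)]; ring
    have h2 := habstsum _ _ hptw (hsum.mul_left _)
    rw [tsum_mul_left] at h2
    simp only [sdisc]
    rw [key, abs_mul, abs_mul, abs_of_nonneg hθ0, abs_of_nonneg hΔx.le]
    calc θ * (Δx * |∑' k : ℤ,
          (μ (((l : ℝ) + 1 - (k : ℝ)) * Δx) - μ (((l : ℝ) - 1 - (k : ℝ)) * Δx)) * ρ k|)
        ≤ θ * (Δx * (2 * Cμ' * Δx * ∑' k : ℤ, ρ k)) := by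
          exact mul_le_mul_of_nonneg_left (mul_le_mul_of_nonneg_left h2 hΔx.le) hθ0
      _ = 2 * θ * Cμ' * Δx * m := by rw [hmdef]; ring
  -- ===== mid-value bounds =====
  have hDb : ∀ l : ℤ,
      |f (intL θ ρ l) (AdiscL μ θ Δx ρ l) - f (intR θ ρ l) (AdiscR μ θ Δx ρ l)|
        ≤ 2 * L * ρ l := by
    intro l
    calc |f (intL θ ρ l) (AdiscL μ θ Δx ρ l) - f (intR θ ρ l) (AdiscR μ θ Δx ρ l)|
        ≤ |f (intL θ ρ l) (AdiscL μ θ Δx ρ l)| + |f (intR θ ρ l) (AdiscR μ θ Δx ρ l)| :=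
          habs2 _ _
      _ ≤ L * |intL θ ρ l| + L * |intR θ ρ l| := add_le_add (hfb _ _) (hfb _ _)
      _ = L * (intL θ ρ l + intR θ ρ l) := by
          rw [abs_of_nonneg (hintL l).1, abs_of_nonneg (hintR l).1]; ring
      _ = 2 * L * ρ l := by rw [husum l]; ring
  have hmidLb : ∀ l : ℤ, |midL f μ θ lam Δx ρ l| ≤ intL θ ρ l + lam * L * ρ l := by
    intro l
    simp only [midL]
    refine le_trans (habs2 _ _) ?_
    rw [abs_of_nonneg (hintL l).1, abs_mul, abs_of_nonneg (by positivity : (0:ℝ) ≤ lam / 2)]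
    have h := mul_le_mul_of_nonneg_left (hDb l) (by positivity : (0:ℝ) ≤ lam / 2)
    calc intL θ ρ l + lam / 2 *
          |f (intL θ ρ l) (AdiscL μ θ Δx ρ l) - f (intR θ ρ l) (AdiscR μ θ Δx ρ l)|
        ≤ intL θ ρ l + lam / 2 * (2 * L * ρ l) := by linarith
      _ = intL θ ρ l + lam * L * ρ l := by ring
  have hmidRb : ∀ l : ℤ, |midR f μ θ lam Δx ρ l| ≤ intR θ ρ l + lam * L * ρ l := by
    intro l
    simp only [midR]
    refine le_trans (habs2 _ _) ?_
    rw [abs_of_nonneg (hintR l).1, abs_mul, abs_of_nonneg (by positivity : (0:ℝ) ≤ lam / 2)]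
    have h := mul_le_mul_of_nonneg_left (hDb l) (by positivity : (0:ℝ) ≤ lam / 2)
    calc intR θ ρ l + lam / 2 *
          |f (intL θ ρ l) (AdiscL μ θ Δx ρ l) - f (intR θ ρ l) (AdiscR μ θ Δx ρ l)|
        ≤ intR θ ρ l + lam / 2 * (2 * L * ρ l) := by linarith
      _ = intR θ ρ l + lam * L * ρ l := by ring
  have hmidLS : ∀ l : ℤ, |midL f μ θ lam Δx ρ l| ≤ (1 + lam * L) * S := by
    intro l
    refine le_trans (hmidLb l) ?_
    have h1 : lam * L * ρ l ≤ lam * L * S := mul_le_mul_of_nonneg_left (hSk l) hlamL0.le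
    have h2 := (hintL l).2
    calc intL θ ρ l + lam * L * ρ l ≤ S + lam * L * S := by linarith
      _ = (1 + lam * L) * S := by ring
  have hmidRS : ∀ l : ℤ, |midR f μ θ lam Δx ρ l| ≤ (1 + lam * L) * S := by
    intro l
    refine le_trans (hmidRb l) ?_
    have h1 : lam * L * ρ l ≤ lam * L * S := mul_le_mul_of_nonneg_left (hSk l) hlamL0.le
    have h2 := (hintR l).2
    calc intR θ ρ l + lam * L * ρ l ≤ S + lam * L * S := by linarith
      _ = (1 + lam * L) * S := by ring
  -- ===== Amid summability and difference bound =====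
  have hAmsumR : ∀ x : ℤ → ℝ, Summable fun l : ℤ => μ (x l) * midR f μ θ lam Δx ρ l := by
    intro x
    apply hsummable _ (Cμ * (2 + lam * L))
    intro l
    rw [abs_mul]
    have h1 : |midR f μ θ lam Δx ρ l| ≤ (2 + lam * L) * ρ l := by
      refine le_trans (hmidRb l) ?_
      have := hintR2ρ l
      calc intR θ ρ l + lam * L * ρ l ≤ 2 * ρ l + lam * L * ρ l := by linarith
        _ = (2 + lam * L) * ρ l := by ring
    calc |μ (x l)| * |midR f μ θ lam Δx ρ l| ≤ Cμ * ((2 + lam * L) * ρ l) :=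
          mul_le_mul (by simpa [Real.norm_eq_abs] using hCμ (x l)) h1 (abs_nonneg _) hCμ0
      _ = Cμ * (2 + lam * L) * ρ l := by ring
  have hAmsumL : ∀ x : ℤ → ℝ, Summable fun l : ℤ => μ (x l) * midL f μ θ lam Δx ρ l := by
    intro x
    apply hsummable _ (Cμ * (2 + lam * L))
    intro l
    rw [abs_mul]
    have h1 : |midL f μ θ lam Δx ρ l| ≤ (2 + lam * L) * ρ l := by
      refine le_trans (hmidLb l) ?_
      have := hintL2ρ l
      calc intL θ ρ l + lam * L * ρ l ≤ 2 * ρ l + lam * L * ρ l := by linarith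
        _ = (2 + lam * L) * ρ l := by ring
    calc |μ (x l)| * |midL f μ θ lam Δx ρ l| ≤ Cμ * ((2 + lam * L) * ρ l) :=
          mul_le_mul (by simpa [Real.norm_eq_abs] using hCμ (x l)) h1 (abs_nonneg _) hCμ0
      _ = Cμ * (2 + lam * L) * ρ l := by ring
  have hAmdiff : |Amid f μ θ lam Δx ρ j - Amid f μ θ lam Δx ρ (j - 1)|
      ≤ (1 + lam * L) * Cμ' * Δx * m := by
    have e1 : Amid f μ θ lam Δx ρ (j - 1) = Δx / 2 * ∑' l : ℤ,
        (μ (((j : ℝ) - (l : ℝ)) * Δx) * midR f μ θ lam Δx ρ l +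
         μ (((j : ℝ) - 1 - (l : ℝ)) * Δx) * midL f μ θ lam Δx ρ l) := by
      simp only [Amid]
      congr 1
      apply tsum_congr
      intro l
      push_cast
      ring_nf
    have key : Amid f μ θ lam Δx ρ j - Amid f μ θ lam Δx ρ (j - 1) = Δx / 2 * ∑' l : ℤ,
        ((μ (((j : ℝ) + 1 - (l : ℝ)) * Δx) - μ (((j : ℝ) - (l : ℝ)) * Δx)) *
            midR f μ θ lam Δx ρ l +
         (μ (((j : ℝ) - (l : ℝ)) * Δx) - μ (((j : ℝ) - 1 - (l : ℝ)) * Δx)) *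
            midL f μ θ lam Δx ρ l) := by
      rw [e1]
      simp only [Amid]
      rw [← mul_sub]
      congr 1
      rw [← Summable.tsum_sub ((hAmsumR _).add (hAmsumL _)) ((hAmsumR _).add (hAmsumL _))]
      apply tsum_congr
      intro l
      push_cast
      ring
    have hptw : ∀ l : ℤ,
        |(μ (((j : ℝ) + 1 - (l : ℝ)) * Δx) - μ (((j : ℝ) - (l : ℝ)) * Δx)) *
            midR f μ θ lam Δx ρ l +
         (μ (((j : ℝ) - (l : ℝ)) * Δx) - μ (((j : ℝ) - 1 - (l : ℝ)) * Δx)) *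
            midL f μ θ lam Δx ρ l|
          ≤ (Cμ' * Δx * (2 + 2 * lam * L)) * ρ l := by
      intro l
      have hμ1 : |μ (((j : ℝ) + 1 - (l : ℝ)) * Δx) - μ (((j : ℝ) - (l : ℝ)) * Δx)|
          ≤ Cμ' * Δx := by
        refine le_trans (lipμ _ _) ?_
        rw [show ((j : ℝ) + 1 - (l : ℝ)) * Δx - ((j : ℝ) - (l : ℝ)) * Δx = Δx from by ring,
          abs_of_nonneg hΔx.le]
      have hμ2 : |μ (((j : ℝ) - (l : ℝ)) * Δx) - μ (((j : ℝ) - 1 - (l : ℝ)) * Δx)|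
          ≤ Cμ' * Δx := by
        refine le_trans (lipμ _ _) ?_
        rw [show ((j : ℝ) - (l : ℝ)) * Δx - ((j : ℝ) - 1 - (l : ℝ)) * Δx = Δx from by ring,
          abs_of_nonneg hΔx.le]
      have hR := hmidRb l
      have hLb := hmidLb l
      have hCΔ : (0:ℝ) ≤ Cμ' * Δx := by positivity
      calc |(μ (((j : ℝ) + 1 - (l : ℝ)) * Δx) - μ (((j : ℝ) - (l : ℝ)) * Δx)) *
              midR f μ θ lam Δx ρ l +
           (μ (((j : ℝ) - (l : ℝ)) * Δx) - μ (((j : ℝ) - 1 - (l : ℝ)) * Δx)) *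
              midL f μ θ lam Δx ρ l|
          ≤ |(μ (((j : ℝ) + 1 - (l : ℝ)) * Δx) - μ (((j : ℝ) - (l : ℝ)) * Δx)) *
              midR f μ θ lam Δx ρ l| +
            |(μ (((j : ℝ) - (l : ℝ)) * Δx) - μ (((j : ℝ) - 1 - (l : ℝ)) * Δx)) *
              midL f μ θ lam Δx ρ l| := abs_add_le _ _
        _ ≤ Cμ' * Δx * (intR θ ρ l + lam * L * ρ l) +
            Cμ' * Δx * (intL θ ρ l + lam * L * ρ l) := by
            rw [abs_mul, abs_mul]
            have t1 : |midR f μ θ lam Δx ρ l| ≥ 0 := abs_nonneg _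
            have b1 : intR θ ρ l + lam * L * ρ l ≥ 0 := by
              have := (hintR l).1; have := mul_nonneg hlamL0.le (hρ l); linarith
            have b2 : intL θ ρ l + lam * L * ρ l ≥ 0 := by
              have := (hintL l).1; have := mul_nonneg hlamL0.le (hρ l); linarith
            exact add_le_add (mul_le_mul hμ1 hR (abs_nonneg _) hCΔ)
              (mul_le_mul hμ2 hLb (abs_nonneg _) hCΔ)
        _ = Cμ' * Δx * ((intL θ ρ l + intR θ ρ l) + 2 * lam * L * ρ l) := by ring
        _ = (Cμ' * Δx * (2 + 2 * lam * L)) * ρ l := by rw [husum l]; ring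
    have h2 := habstsum _ _ hptw (hsum.mul_left _)
    rw [tsum_mul_left] at h2
    rw [key, abs_mul, abs_of_nonneg (by positivity : (0:ℝ) ≤ Δx / 2)]
    calc Δx / 2 * |∑' l : ℤ,
          ((μ (((j : ℝ) + 1 - (l : ℝ)) * Δx) - μ (((j : ℝ) - (l : ℝ)) * Δx)) *
              midR f μ θ lam Δx ρ l +
           (μ (((j : ℝ) - (l : ℝ)) * Δx) - μ (((j : ℝ) - 1 - (l : ℝ)) * Δx)) *
              midL f μ θ lam Δx ρ l)|
        ≤ Δx / 2 * (Cμ' * Δx * (2 + 2 * lam * L) * ∑' k : ℤ, ρ k) :=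
          mul_le_mul_of_nonneg_left h2 (by positivity)
      _ = (1 + lam * L) * Cμ' * Δx * m := by rw [hmdef]; ring
  -- ===== slope (secant) constants =====
  have slope : ∀ A x y : ℝ, ∃ c : ℝ, |c| ≤ L ∧ f x A - f y A = c * (x - y) := by
    intro A x y
    by_cases h : x = y
    · exact ⟨0, by simpa using hLnn, by simp [h]⟩
    · refine ⟨(f x A - f y A) / (x - y), ?_, (div_mul_cancel₀ _ (sub_ne_zero.2 h)).symm⟩
      rw [abs_div, div_le_iff₀ (abs_pos.2 (sub_ne_zero.2 h))]
      exact lipf1 A x y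
  have hc0 : ∀ l : ℤ, ∃ c : ℝ, |c| ≤ L ∧
      f (intL θ ρ l) (AdiscL μ θ Δx ρ l) - f (intR θ ρ l) (AdiscL μ θ Δx ρ l) =
        c * slp θ ρ l := by
    intro l
    obtain ⟨c, h1, h2⟩ := slope (AdiscL μ θ Δx ρ l) (intL θ ρ l) (intR θ ρ l)
    exact ⟨c, h1, by rw [h2, huvdiff l]⟩
  choose c hcL hcE using hc0
  -- ===== hat values =====
  obtain ⟨mhatL, hmhatLdef⟩ : ∃ g : ℤ → ℝ, g = fun l => intL θ ρ l - lam / 2 * (c l * slp θ ρ l) :=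
    ⟨_, rfl⟩
  obtain ⟨mhatR, hmhatRdef⟩ : ∃ g : ℤ → ℝ, g = fun l => intR θ ρ l - lam / 2 * (c l * slp θ ρ l) :=
    ⟨_, rfl⟩
  obtain ⟨e, hedef⟩ : ∃ g : ℤ → ℝ, g = fun l =>
      f (intR θ ρ l) (AdiscL μ θ Δx ρ l) - f (intR θ ρ l) (AdiscR μ θ Δx ρ l) := ⟨_, rfl⟩
  have hmLe : ∀ l : ℤ, midL f μ θ lam Δx ρ l = mhatL l - lam / 2 * e l := by
    intro l
    simp only [midL, hmhatLdef, hedef]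
    linear_combination (-(lam / 2)) * hcE l
  have hmRe : ∀ l : ℤ, midR f μ θ lam Δx ρ l = mhatR l - lam / 2 * e l := by
    intro l
    simp only [midR, hmhatRdef, hedef]
    linear_combination (-(lam / 2)) * hcE l
  -- hat value bounds
  have hkeyθ : (1 + lam * L) * θ ≤ 1 := by
    have hf1 : lam * L * θ ≤ 2 / 27 * θ := mul_le_mul_of_nonneg_right hlamL2 hθ0
    linarith only [hf1, hθ1, hθ0]
  have hmhatB : ∀ l : ℤ, (0 ≤ mhatL l ∧ mhatL l ≤ S) ∧ (0 ≤ mhatR l ∧ mhatR l ≤ S) := by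
    intro l
    have hkey2 : ∀ d : ℝ, |d| ≤ 1 + lam * L →
        0 ≤ ρ l + d * (slp θ ρ l / 2) ∧ ρ l + d * (slp θ ρ l / 2) ≤ S := by
      intro d hd
      have hhalf : |slp θ ρ l / 2| ≤ θ * min (ρ l) (S - ρ l) := by
        rw [abs_div, abs_of_nonneg (by norm_num : (0:ℝ) ≤ (2:ℝ))]
        linarith [hmm l]
      have habsd : |d * (slp θ ρ l / 2)| ≤ (1 + lam * L) * (θ * min (ρ l) (S - ρ l)) := by
        rw [abs_mul]
        exact mul_le_mul hd hhalf (abs_nonneg _) (by linarith [hlamL0.le])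
      obtain ⟨hd1, hd2⟩ := abs_le.1 habsd
      have t0 : 0 ≤ (1 + lam * L) * θ := mul_nonneg (by linarith only [hlamL0.le]) hθ0
      have t1 : (1 + lam * L) * (θ * min (ρ l) (S - ρ l)) ≤ ρ l := by
        calc (1 + lam * L) * (θ * min (ρ l) (S - ρ l))
            ≤ (1 + lam * L) * (θ * ρ l) := by
              refine mul_le_mul_of_nonneg_left ?_ (by linarith [hlamL0.le])
              exact mul_le_mul_of_nonneg_left (hmin1 l) hθ0
          _ = ((1 + lam * L) * θ) * ρ l := by ring
          _ ≤ 1 * ρ l := mul_le_mul_of_nonneg_right hkeyθ (hρ l)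
          _ = ρ l := one_mul _
      have t2 : (1 + lam * L) * (θ * min (ρ l) (S - ρ l)) ≤ S - ρ l := by
        calc (1 + lam * L) * (θ * min (ρ l) (S - ρ l))
            ≤ (1 + lam * L) * (θ * (S - ρ l)) := by
              refine mul_le_mul_of_nonneg_left ?_ (by linarith [hlamL0.le])
              exact mul_le_mul_of_nonneg_left (hmin2 l) hθ0
          _ = ((1 + lam * L) * θ) * (S - ρ l) := by ring
          _ ≤ 1 * (S - ρ l) := mul_le_mul_of_nonneg_right hkeyθ (by linarith [hSk l])
          _ = S - ρ l := one_mul _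
      constructor
      · linarith
      · linarith
    have hdL : |1 - lam * c l| ≤ 1 + lam * L := by
      have h1 := abs_le.1 (hcL l)
      have h2 : |lam * c l| ≤ lam * L := by
        rw [abs_mul, abs_of_nonneg hlam0.le]
        exact mul_le_mul_of_nonneg_left (hcL l) hlam0.le
      obtain ⟨h3, h4⟩ := abs_le.1 h2
      exact abs_le.mpr ⟨by linarith, by linarith⟩
    have hdR : |-(1 + lam * c l)| ≤ 1 + lam * L := by
      have h2 : |lam * c l| ≤ lam * L := by
        rw [abs_mul, abs_of_nonneg hlam0.le]
        exact mul_le_mul_of_nonneg_left (hcL l) hlam0.le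
      obtain ⟨h3, h4⟩ := abs_le.1 h2
      rw [abs_neg]
      exact abs_le.mpr ⟨by linarith, by linarith⟩
    have eL : mhatL l = ρ l + (1 - lam * c l) * (slp θ ρ l / 2) := by
      simp only [hmhatLdef, intL]; ring
    have eR : mhatR l = ρ l + (-(1 + lam * c l)) * (slp θ ρ l / 2) := by
      simp only [hmhatRdef, intR]; ring
    constructor
    · rw [eL]; exact hkey2 _ hdL
    · rw [eR]; exact hkey2 _ hdR
  -- ===== e bound =====
  obtain ⟨E0, hE0def⟩ : ∃ E0 : ℝ, E0 = M * S * (2 * θ * Cμ' * Δx * m) := ⟨_, rfl⟩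
  have hE00 : 0 ≤ E0 := by
    rw [hE0def]
    exact mul_nonneg (mul_nonneg hM.le hS0) (mul_nonneg (by positivity) hm0)
  have heb : ∀ l : ℤ, |e l| ≤ E0 := by
    intro l
    rw [hedef]
    refine le_trans (lipf2 _ _ _) ?_
    rw [hALR l, abs_of_nonneg (hintR l).1, hE0def]
    exact mul_le_mul (mul_le_mul_of_nonneg_left (hintR l).2 hM.le) (hsb l) (abs_nonneg _)
      (mul_nonneg hM.le hS0)
  -- ===== secant constants for the frozen scheme =====
  obtain ⟨C1, hC1L, hC1E⟩ := slope (Amid f μ θ lam Δx ρ (j - 1)) (mhatL j) (mhatR j)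
  obtain ⟨C2, hC2L, hC2E⟩ := slope (Amid f μ θ lam Δx ρ (j - 1)) (mhatR (j + 1)) (mhatL (j - 1))
  have hmhatsub : mhatL j - mhatR j = slp θ ρ j := by
    simp only [hmhatLdef, hmhatRdef, intL, intR]; ring
  have hmhatadd : mhatL j + mhatR j = 2 * ρ j - lam * (c j * slp θ ρ j) := by
    simp only [hmhatLdef, hmhatRdef, intL, intR]; ring
  have r1 : f (mhatL j) (Amid f μ θ lam Δx ρ (j - 1))
      - f (mhatR j) (Amid f μ θ lam Δx ρ (j - 1)) = C1 * slp θ ρ j := by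
    rw [hC1E, hmhatsub]
  -- ===== the frozen-scheme value P =====
  obtain ⟨P, hPdef⟩ : ∃ P : ℝ, P = (1 - α) * ρ j - lam / 2 * (C1 - α * c j) * slp θ ρ j
      + (α - lam * C2) / 2 * mhatR (j + 1) + (α + lam * C2) / 2 * mhatL (j - 1) := ⟨_, rfl⟩
  have hlamne : lam ≠ 0 := hlam0.ne'
  have hkey : mhUpdate f μ θ α lam Δx ρ j =
      ρ j - lam / 2 * (f (midL f μ θ lam Δx ρ j) (Amid f μ θ lam Δx ρ j)
          + f (midR f μ θ lam Δx ρ (j + 1)) (Amid f μ θ lam Δx ρ j)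
          - f (midL f μ θ lam Δx ρ (j - 1)) (Amid f μ θ lam Δx ρ (j - 1))
          - f (midR f μ θ lam Δx ρ j) (Amid f μ θ lam Δx ρ (j - 1)))
        + α / 2 * ((midR f μ θ lam Δx ρ (j + 1) - midL f μ θ lam Δx ρ j)
          - (midR f μ θ lam Δx ρ j - midL f μ θ lam Δx ρ (j - 1))) := by
    simp only [mhUpdate, numFlux]
    field_simp
    ring
  have hdecomp : mhUpdate f μ θ α lam Δx ρ j = P
      - lam / 2 * ((f (midL f μ θ lam Δx ρ j) (Amid f μ θ lam Δx ρ j)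
            - f (mhatL j) (Amid f μ θ lam Δx ρ (j - 1)))
        + (f (midR f μ θ lam Δx ρ (j + 1)) (Amid f μ θ lam Δx ρ j)
            - f (mhatR (j + 1)) (Amid f μ θ lam Δx ρ (j - 1)))
        - (f (midL f μ θ lam Δx ρ (j - 1)) (Amid f μ θ lam Δx ρ (j - 1))
            - f (mhatL (j - 1)) (Amid f μ θ lam Δx ρ (j - 1)))
        - (f (midR f μ θ lam Δx ρ j) (Amid f μ θ lam Δx ρ (j - 1))
            - f (mhatR j) (Amid f μ θ lam Δx ρ (j - 1))))
      - α * lam / 4 * (e (j + 1) - 2 * e j + e (j - 1)) := by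
    rw [hkey, hPdef]
    linear_combination (α / 2) * hmRe (j + 1) - (α / 2) * hmLe j - (α / 2) * hmRe j
      + (α / 2) * hmLe (j - 1) - (lam / 2) * r1 - (lam / 2) * hC2E - (α / 2) * hmhatadd
  -- ===== bounds on P =====
  have hnum : lam * L * (1 + α) * θ ≤ 1 - α := by
    have a1 : lam * L * θ ≤ 2 / 27 * θ := mul_le_mul_of_nonneg_right hlamL2 hθ0
    have a2 : lam * L * θ ≤ 1 / 27 := by linarith only [a1, hθ1, hθ0]
    have a3 : 0 ≤ lam * L * θ := mul_nonneg hlamL0.le hθ0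
    have a4 : lam * L * θ * α ≤ 1 / 27 * (8 / 27) := mul_le_mul a2 hα1.le hα0.le (by norm_num)
    linarith only [a2, a4, hα1]
  have hC2' := abs_le.1 hC2L
  have hWb : |lam / 2 * (C1 - α * c j)| ≤ lam * L * (1 + α) / 2 := by
    rw [abs_mul, abs_of_nonneg (by positivity : (0:ℝ) ≤ lam / 2)]
    have h2 : |α * c j| ≤ α * L := by
      rw [abs_mul, abs_of_pos hα0]
      exact mul_le_mul_of_nonneg_left (hcL j) hα0.le
    have h1 : |C1 - α * c j| ≤ L + α * L := by
      refine le_trans (habs2 _ _) ?_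
      linarith only [hC1L, h2]
    calc lam / 2 * |C1 - α * c j| ≤ lam / 2 * (L + α * L) :=
          mul_le_mul_of_nonneg_left h1 (by positivity)
      _ = lam * L * (1 + α) / 2 := by ring
  have hT : |lam / 2 * (C1 - α * c j) * slp θ ρ j|
      ≤ lam * L * (1 + α) * θ * min (ρ j) (S - ρ j) := by
    rw [abs_mul]
    calc |lam / 2 * (C1 - α * c j)| * |slp θ ρ j|
        ≤ lam * L * (1 + α) / 2 * (2 * θ * min (ρ j) (S - ρ j)) := by
          refine mul_le_mul hWb (hmm j) (abs_nonneg _) ?_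
          have : (0:ℝ) ≤ lam * L := hlamL0.le
          positivity
      _ = lam * L * (1 + α) * θ * min (ρ j) (S - ρ j) := by ring
  obtain ⟨hT1, hT2⟩ := abs_le.1 hT
  have hcoefR : 0 ≤ (α - lam * C2) / 2 := by
    have h1 : lam * C2 ≤ lam * L := mul_le_mul_of_nonneg_left hC2'.2 hlam0.le
    linarith only [h1, hlamL1, hα0]
  have hcoefL : 0 ≤ (α + lam * C2) / 2 := by
    have h1 : lam * (-L) ≤ lam * C2 := mul_le_mul_of_nonneg_left hC2'.1 hlam0.le
    have h2 : lam * (-L) = -(lam * L) := by ring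
    linarith only [h1, h2, hlamL1, hα0]
  have htR : (α - lam * C2) / 2 * mhatR (j + 1) ≤ (α - lam * C2) / 2 * S :=
    mul_le_mul_of_nonneg_left ((hmhatB (j + 1)).2.2) hcoefR
  have htL : (α + lam * C2) / 2 * mhatL (j - 1) ≤ (α + lam * C2) / 2 * S :=
    mul_le_mul_of_nonneg_left ((hmhatB (j - 1)).1.2) hcoefL
  have htR0 : 0 ≤ (α - lam * C2) / 2 * mhatR (j + 1) := mul_nonneg hcoefR (hmhatB (j + 1)).2.1
  have htL0 : 0 ≤ (α + lam * C2) / 2 * mhatL (j - 1) := mul_nonneg hcoefL (hmhatB (j - 1)).1.1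
  have ht3a : lam * L * (1 + α) * θ * min (ρ j) (S - ρ j) ≤ (1 - α) * (S - ρ j) :=
    mul_le_mul hnum (hmin2 j) (hmin0 j) (by linarith only [hα1'])
  have ht3b : lam * L * (1 + α) * θ * min (ρ j) (S - ρ j) ≤ (1 - α) * ρ j :=
    mul_le_mul hnum (hmin1 j) (hmin0 j) (by linarith only [hα1'])
  have hsumco : (α - lam * C2) / 2 * S + (α + lam * C2) / 2 * S = α * S := by ring
  have hPu : P ≤ S := by
    rw [hPdef]
    linarith only [hT1, ht3a, htR, htL, hρ j, hSk j]
  have hPl : 0 ≤ P := by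
    rw [hPdef]
    linarith only [hT2, ht3b, htR0, htL0, hρ j]
  -- ===== error bounds =====
  have hε3b : |f (midL f μ θ lam Δx ρ (j - 1)) (Amid f μ θ lam Δx ρ (j - 1))
      - f (mhatL (j - 1)) (Amid f μ θ lam Δx ρ (j - 1))| ≤ L * (lam / 2 * E0) := by
    refine le_trans (lipf1 _ _ _) ?_
    rw [hmLe (j - 1), show mhatL (j - 1) - lam / 2 * e (j - 1) - mhatL (j - 1)
        = -(lam / 2 * e (j - 1)) from by ring, abs_neg, abs_mul,
      abs_of_nonneg (by positivity : (0:ℝ) ≤ lam / 2)]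
    exact mul_le_mul_of_nonneg_left
      (mul_le_mul_of_nonneg_left (heb (j - 1)) (by positivity)) hLnn
  have hε4b : |f (midR f μ θ lam Δx ρ j) (Amid f μ θ lam Δx ρ (j - 1))
      - f (mhatR j) (Amid f μ θ lam Δx ρ (j - 1))| ≤ L * (lam / 2 * E0) := by
    refine le_trans (lipf1 _ _ _) ?_
    rw [hmRe j, show mhatR j - lam / 2 * e j - mhatR j
        = -(lam / 2 * e j) from by ring, abs_neg, abs_mul,
      abs_of_nonneg (by positivity : (0:ℝ) ≤ lam / 2)]
    exact mul_le_mul_of_nonneg_left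
      (mul_le_mul_of_nonneg_left (heb j) (by positivity)) hLnn
  have hMS0 : (0:ℝ) ≤ M * ((1 + lam * L) * S) := by
    refine mul_nonneg hM.le (mul_nonneg (by linarith [hlamL0.le]) hS0)
  have hε1b : |f (midL f μ θ lam Δx ρ j) (Amid f μ θ lam Δx ρ j)
      - f (mhatL j) (Amid f μ θ lam Δx ρ (j - 1))|
      ≤ M * ((1 + lam * L) * S) * ((1 + lam * L) * Cμ' * Δx * m) + L * (lam / 2 * E0) := by
    refine le_trans (abs_sub_le _ (f (midL f μ θ lam Δx ρ j) (Amid f μ θ lam Δx ρ (j - 1))) _) ?_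
    have p1 : |f (midL f μ θ lam Δx ρ j) (Amid f μ θ lam Δx ρ j)
        - f (midL f μ θ lam Δx ρ j) (Amid f μ θ lam Δx ρ (j - 1))|
        ≤ M * ((1 + lam * L) * S) * ((1 + lam * L) * Cμ' * Δx * m) := by
      refine le_trans (lipf2 _ _ _) ?_
      exact mul_le_mul (mul_le_mul_of_nonneg_left (hmidLS j) hM.le) hAmdiff
        (abs_nonneg _) hMS0
    have p2 : |f (midL f μ θ lam Δx ρ j) (Amid f μ θ lam Δx ρ (j - 1))
        - f (mhatL j) (Amid f μ θ lam Δx ρ (j - 1))| ≤ L * (lam / 2 * E0) := by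
      refine le_trans (lipf1 _ _ _) ?_
      rw [hmLe j, show mhatL j - lam / 2 * e j - mhatL j = -(lam / 2 * e j) from by ring,
        abs_neg, abs_mul, abs_of_nonneg (by positivity : (0:ℝ) ≤ lam / 2)]
      exact mul_le_mul_of_nonneg_left
        (mul_le_mul_of_nonneg_left (heb j) (by positivity)) hLnn
    linarith
  have hε2b : |f (midR f μ θ lam Δx ρ (j + 1)) (Amid f μ θ lam Δx ρ j)
      - f (mhatR (j + 1)) (Amid f μ θ lam Δx ρ (j - 1))|
      ≤ M * ((1 + lam * L) * S) * ((1 + lam * L) * Cμ' * Δx * m) + L * (lam / 2 * E0) := by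
    refine le_trans (abs_sub_le _ (f (midR f μ θ lam Δx ρ (j + 1))
      (Amid f μ θ lam Δx ρ (j - 1))) _) ?_
    have p1 : |f (midR f μ θ lam Δx ρ (j + 1)) (Amid f μ θ lam Δx ρ j)
        - f (midR f μ θ lam Δx ρ (j + 1)) (Amid f μ θ lam Δx ρ (j - 1))|
        ≤ M * ((1 + lam * L) * S) * ((1 + lam * L) * Cμ' * Δx * m) := by
      refine le_trans (lipf2 _ _ _) ?_
      exact mul_le_mul (mul_le_mul_of_nonneg_left (hmidRS (j + 1)) hM.le) hAmdiff
        (abs_nonneg _) hMS0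
    have p2 : |f (midR f μ θ lam Δx ρ (j + 1)) (Amid f μ θ lam Δx ρ (j - 1))
        - f (mhatR (j + 1)) (Amid f μ θ lam Δx ρ (j - 1))| ≤ L * (lam / 2 * E0) := by
      refine le_trans (lipf1 _ _ _) ?_
      rw [hmRe (j + 1), show mhatR (j + 1) - lam / 2 * e (j + 1) - mhatR (j + 1)
          = -(lam / 2 * e (j + 1)) from by ring,
        abs_neg, abs_mul, abs_of_nonneg (by positivity : (0:ℝ) ≤ lam / 2)]
      exact mul_le_mul_of_nonneg_left
        (mul_le_mul_of_nonneg_left (heb (j + 1)) (by positivity)) hLnn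
    linarith
  -- ===== total error =====
  have hlamdx : lam * Δx = Δt := by
    rw [hlam]; field_simp
  have herr : |mhUpdate f μ θ α lam Δx ρ j - P|
      ≤ Δt * (M * S * Cμ' * m * ((1 + lam * L) ^ 2 + 2 * θ * (lam * L + α))) := by
    have hsub : mhUpdate f μ θ α lam Δx ρ j - P =
        -(lam / 2 * ((f (midL f μ θ lam Δx ρ j) (Amid f μ θ lam Δx ρ j)
            - f (mhatL j) (Amid f μ θ lam Δx ρ (j - 1)))
          + (f (midR f μ θ lam Δx ρ (j + 1)) (Amid f μ θ lam Δx ρ j)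
              - f (mhatR (j + 1)) (Amid f μ θ lam Δx ρ (j - 1)))
          - (f (midL f μ θ lam Δx ρ (j - 1)) (Amid f μ θ lam Δx ρ (j - 1))
              - f (mhatL (j - 1)) (Amid f μ θ lam Δx ρ (j - 1)))
          - (f (midR f μ θ lam Δx ρ j) (Amid f μ θ lam Δx ρ (j - 1))
              - f (mhatR j) (Amid f μ θ lam Δx ρ (j - 1))))
          + α * lam / 4 * (e (j + 1) - 2 * e j + e (j - 1))) := by
      rw [hdecomp]; ring
    rw [hsub, abs_neg]
    refine le_trans (abs_add_le _ _) ?_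
    have q1 : |lam / 2 * ((f (midL f μ θ lam Δx ρ j) (Amid f μ θ lam Δx ρ j)
            - f (mhatL j) (Amid f μ θ lam Δx ρ (j - 1)))
          + (f (midR f μ θ lam Δx ρ (j + 1)) (Amid f μ θ lam Δx ρ j)
              - f (mhatR (j + 1)) (Amid f μ θ lam Δx ρ (j - 1)))
          - (f (midL f μ θ lam Δx ρ (j - 1)) (Amid f μ θ lam Δx ρ (j - 1))
              - f (mhatL (j - 1)) (Amid f μ θ lam Δx ρ (j - 1)))
          - (f (midR f μ θ lam Δx ρ j) (Amid f μ θ lam Δx ρ (j - 1))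
              - f (mhatR j) (Amid f μ θ lam Δx ρ (j - 1))))|
        ≤ lam / 2 * (2 * (M * ((1 + lam * L) * S) * ((1 + lam * L) * Cμ' * Δx * m))
            + 4 * (L * (lam / 2 * E0))) := by
      rw [abs_mul, abs_of_nonneg (by positivity : (0:ℝ) ≤ lam / 2)]
      refine mul_le_mul_of_nonneg_left ?_ (by positivity)
      refine le_trans (habs4 _ _ _ _) ?_
      linarith only [hε1b, hε2b, hε3b, hε4b]
    have q2 : |α * lam / 4 * (e (j + 1) - 2 * e j + e (j - 1))|
        ≤ α * lam / 4 * (4 * E0) := by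
      rw [abs_mul, abs_of_nonneg (by positivity : (0:ℝ) ≤ α * lam / 4)]
      refine mul_le_mul_of_nonneg_left ?_ (by positivity)
      refine le_trans (habs3 _ _ _) ?_
      linarith only [heb (j + 1), heb j, heb (j - 1)]
    refine le_trans (add_le_add q1 q2) (le_of_eq ?_)
    rw [hE0def, ← hlamdx]
    ring
  -- ===== conclusion =====
  have hPabs : |P| ≤ S := abs_le.mpr ⟨by linarith only [hPl, hS0], hPu⟩
  have hfin1 : |mhUpdate f μ θ α lam Δx ρ j| ≤
      S + Δt * (M * S * Cμ' * m * ((1 + lam * L) ^ 2 + 2 * θ * (lam * L + α))) := by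
    have h := abs_add_le P (mhUpdate f μ θ α lam Δx ρ j - P)
    rw [show P + (mhUpdate f μ θ α lam Δx ρ j - P) = mhUpdate f μ θ α lam Δx ρ j
      from by ring] at h
    linarith only [hPabs, herr, h]
  have hbr : (1 + lam * L) ^ 2 + 2 * θ * (lam * L + α)
      ≤ (1 + θ) ^ 2 * (α + lam * L + (1 + lam * L) ^ 2) := by
    have q1 : 0 ≤ (θ ^ 2 + 2 * θ) * (1 + lam * L) ^ 2 := by positivity
    have q2 : 0 ≤ (1 + θ ^ 2) * (α + lam * L) :=
      mul_nonneg (by positivity) (by linarith [hlamL0.le])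
    linarith only [q1, q2]
  have hKnn : 0 ≤ Δt * (M * S * Cμ' * m) :=
    mul_nonneg hΔt.le (mul_nonneg (mul_nonneg (mul_nonneg hM.le hS0) hCp0) hm0)
  have hstep : Δt * (M * S * Cμ' * m * ((1 + lam * L) ^ 2 + 2 * θ * (lam * L + α)))
      ≤ (α + lam * L + (1 + lam * L) ^ 2) * M * (1 + θ) ^ 2 * Cμ' * m * Δt * S := by
    calc Δt * (M * S * Cμ' * m * ((1 + lam * L) ^ 2 + 2 * θ * (lam * L + α)))
        = Δt * (M * S * Cμ' * m) * ((1 + lam * L) ^ 2 + 2 * θ * (lam * L + α)) := by ring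
      _ ≤ Δt * (M * S * Cμ' * m) * ((1 + θ) ^ 2 * (α + lam * L + (1 + lam * L) ^ 2)) :=
          mul_le_mul_of_nonneg_left hbr hKnn
      _ = (α + lam * L + (1 + lam * L) ^ 2) * M * (1 + θ) ^ 2 * Cμ' * m * Δt * S := by ring
  calc |mhUpdate f μ θ α lam Δx ρ j|
      ≤ S + Δt * (M * S * Cμ' * m * ((1 + lam * L) ^ 2 + 2 * θ * (lam * L + α))) := hfin1
    _ ≤ S + (α + lam * L + (1 + lam * L) ^ 2) * M * (1 + θ) ^ 2 * Cμ' * m * Δt * S := by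
        linarith only [hstep]
    _ = (1 + (α + lam * L + (1 + lam * L) ^ 2) * M * (1 + θ) ^ 2 * Cμ' * m * Δt) * S := by
        ring
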